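/- Let M({G}) be the space of symmetric p×p matrices m(a,b) with diagonal (a₁,...,a_p), off-diagonal entry b on every edge of a fixed tree T = (V,E) on p vertices, and zero elsewhere. Let P_G = M({G}) ∩ {positive definite}. Then the dual cone P_G* equals {m(a',b') : a'_i > 0 for all i, and |b'| < (1/(p-1)) Σ_{(i,j)∈E} √(a'_i a'_j)}. -/

import Mathlib

open Matrix

/-- The matrix `m(a,b)` for a coloured tree: diagonal `a`, common off-diagonal
value `b` on the edges of `G`, zero elsewhere. -/
def treeMat {p : ℕ} (G : SimpleGraph (Fin p)) [DecidableRel G.Adj]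
    (a : Fin p → ℝ) (b : ℝ) : Matrix (Fin p) (Fin p) ℝ :=
  Matrix.of fun i j => if i = j then a i else if G.Adj i j then b else 0

namespace DualTree

variable {p : ℕ} (G : SimpleGraph (Fin p)) [DecidableRel G.Adj]

lemma treeMat_apply (a : Fin p → ℝ) (b : ℝ) (i j : Fin p) :
    treeMat G a b i j = if i = j then a i else if G.Adj i j then b else 0 := rfl

lemma trace_treeMat_mul (a a' : Fin p → ℝ) (b b' : ℝ) :
    ((treeMat G a b) * (treeMat G a' b')).trace
      = (∑ i, a i * a' i) + (b * b') * (∑ i, ∑ j, if G.Adj i j then (1:ℝ) else 0) := by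
  classical
  have key : ∀ i j : Fin p,
      treeMat G a b i j * treeMat G a' b' j i
        = (if i = j then a i * a' i else 0) + (b * b') * (if G.Adj i j then (1:ℝ) else 0) := by
    intro i j
    rw [treeMat_apply, treeMat_apply]
    by_cases h : i = j
    · subst h
      simp [G.irrefl]
    · have h' : ¬ j = i := fun hh => h hh.symm
      by_cases hadj : G.Adj i j
      · simp [h, h', hadj, G.adj_comm i j |>.mp hadj, mul_comm]
      · have hadj' : ¬ G.Adj j i := fun hh => hadj (G.adj_comm j i |>.mp hh)
        simp [h, h', hadj, hadj']
  rw [Matrix.trace]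
  simp only [Matrix.diag, Matrix.mul_apply, key, Finset.sum_add_distrib,
    Finset.sum_ite_eq, Finset.mem_univ, if_true, ← Finset.mul_sum]

lemma quad_treeMat (a : Fin p → ℝ) (b : ℝ) (x : Fin p → ℝ) :
    x ⬝ᵥ (treeMat G a b) *ᵥ x
      = (∑ i, a i * x i ^ 2) + b * (∑ i, ∑ j, if G.Adj i j then x i * x j else 0) := by
  classical
  have key : ∀ i j : Fin p,
      x i * (treeMat G a b i j * x j)
        = (if i = j then a i * x i ^ 2 else 0) + b * (if G.Adj i j then x i * x j else 0) := by
    intro i j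
    rw [treeMat_apply]
    by_cases h : i = j
    · subst h; simp [G.irrefl]; ring
    · by_cases hadj : G.Adj i j
      · simp [h, hadj]; ring
      · simp [h, hadj]
  have expand : x ⬝ᵥ (treeMat G a b) *ᵥ x = ∑ i, ∑ j, x i * (treeMat G a b i j * x j) := by
    simp [dotProduct, Matrix.mulVec, Finset.mul_sum]
  rw [expand]
  simp only [key, Finset.sum_add_distrib, Finset.sum_ite_eq, Finset.mem_univ, if_true,
    ← Finset.mul_sum]

lemma edge_count (hG : G.IsTree) :
    (∑ i, ∑ j, if G.Adj i j then (1:ℝ) else 0) = 2 * ((p : ℝ) - 1) := by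
  classical
  have h1 : ∀ i : Fin p, (∑ j, if G.Adj i j then (1:ℝ) else 0) = (G.degree i : ℝ) := by
    intro i
    rw [SimpleGraph.degree, SimpleGraph.neighborFinset_eq_filter]
    rw [Finset.sum_boole]
  have hp1 : 1 ≤ p := by
    have := hG.isConnected.nonempty
    have : 0 < p := Fin.pos_iff_nonempty.mpr this
    omega
  have h2 : ∑ i, G.degree i = 2 * (p - 1) := by
    rw [SimpleGraph.sum_degrees_eq_twice_card_edges]
    have := hG.card_edgeFinset
    simp only [Fintype.card_fin] at this
    omega
  simp only [h1]
  rw [← Nat.cast_sum, h2]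
  push_cast [hp1]
  try rfl

lemma treeMat_isHermitian (a : Fin p → ℝ) (b : ℝ) : (treeMat G a b).IsHermitian := by
  ext i j
  simp only [Matrix.conjTranspose_apply, treeMat_apply, star_trivial]
  by_cases h : i = j
  · subst h; simp
  · have h' : ¬ j = i := fun hh => h hh.symm
    by_cases hadj : G.Adj i j
    · simp [h, h', hadj, G.adj_comm i j |>.mp hadj]
    · have hadj' : ¬ G.Adj j i := fun hh => hadj (G.adj_comm j i |>.mp hh)
      simp [h, h', hadj, hadj']

lemma treeMat_zero (a : Fin p → ℝ) : treeMat G a 0 = Matrix.diagonal a := by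
  ext i j
  rw [treeMat_apply, Matrix.diagonal_apply]
  split_ifs <;> rfl

/-- `treeMat` as a linear map. -/
def treeMatL : ((Fin p → ℝ) × ℝ) →ₗ[ℝ] Matrix (Fin p) (Fin p) ℝ where
  toFun x := treeMat G x.1 x.2
  map_add' x y := by
    ext i j
    simp only [Matrix.add_apply, treeMat_apply, Pi.add_apply]
    split_ifs <;> simp
  map_smul' c x := by
    ext i j
    simp only [Matrix.smul_apply, treeMat_apply, Pi.smul_apply, RingHom.id_apply,
      smul_eq_mul, Prod.smul_fst, Prod.smul_snd]
    split_ifs <;> simp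

lemma isClosed_range : IsClosed {M : Matrix (Fin p) (Fin p) ℝ | ∃ a b, M = treeMat G a b} := by
  have : {M : Matrix (Fin p) (Fin p) ℝ | ∃ a b, M = treeMat G a b}
      = (LinearMap.range (treeMatL G) : Submodule ℝ (Matrix (Fin p) (Fin p) ℝ)) := by
    ext M
    constructor
    · rintro ⟨a, b, rfl⟩; exact ⟨(a, b), rfl⟩
    · rintro ⟨⟨a, b⟩, rfl⟩; exact ⟨a, b, rfl⟩
  rw [this]
  exact Submodule.closed_of_finiteDimensional _

lemma isClosed_psd : IsClosed {M : Matrix (Fin p) (Fin p) ℝ | M.PosSemidef} := by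
  have : {M : Matrix (Fin p) (Fin p) ℝ | M.PosSemidef}
      = {M : Matrix (Fin p) (Fin p) ℝ | Mᴴ = M}
        ∩ ⋂ x : Fin p → ℝ, {M | 0 ≤ star x ⬝ᵥ M *ᵥ x} := by
    ext M
    simp only [Set.mem_setOf_eq, Set.mem_inter_iff, Set.mem_iInter]
    exact Matrix.posSemidef_iff_dotProduct_mulVec
  rw [this]
  refine IsClosed.inter (isClosed_eq continuous_id.matrix_conjTranspose continuous_id) ?_
  refine isClosed_iInter fun x => ?_
  have hc : Continuous fun M : Matrix (Fin p) (Fin p) ℝ => star x ⬝ᵥ M *ᵥ x := by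
    simp only [dotProduct, Matrix.mulVec]
    refine continuous_finset_sum _ fun i _ => Continuous.mul continuous_const ?_
    exact continuous_finset_sum _ fun j _ =>
      Continuous.mul (continuous_id.matrix_elem i j) continuous_const
  exact isClosed_le continuous_const hc

lemma closure_sub :
    closure {K : Matrix (Fin p) (Fin p) ℝ | (∃ a b, K = treeMat G a b) ∧ K.PosDef}
      ⊆ {K : Matrix (Fin p) (Fin p) ℝ | (∃ a b, K = treeMat G a b) ∧ K.PosSemidef} := by
  refine closure_minimal ?_ ((isClosed_range G).inter (isClosed_psd (p := p)))
  rintro K ⟨h1, h2⟩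
  exact ⟨h1, h2.posSemidef⟩

lemma mem_closure_of_psd (a : Fin p → ℝ) (b : ℝ) (h : (treeMat G a b).PosSemidef) :
    treeMat G a b ∈ closure {K : Matrix (Fin p) (Fin p) ℝ |
      (∃ a b, K = treeMat G a b) ∧ K.PosDef} := by
  have key : ∀ t : ℝ, treeMat G (fun i => a i + t) b = treeMat G a b + t • (1 : Matrix _ _ ℝ) := by
    intro t
    ext i j
    simp only [Matrix.add_apply, Matrix.smul_apply, treeMat_apply, Matrix.one_apply, smul_eq_mul]
    split_ifs <;> simp
  have htend : Filter.Tendsto (fun t : ℝ => treeMat G a b + t • (1 : Matrix _ _ ℝ))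
      (nhdsWithin 0 (Set.Ioi 0)) (nhds (treeMat G a b)) := by
    have hcont : Continuous fun t : ℝ => treeMat G a b + t • (1 : Matrix (Fin p) (Fin p) ℝ) :=
      continuous_const.add (continuous_id.smul continuous_const)
    have := (hcont.tendsto 0).mono_left (nhdsWithin_le_nhds (s := Set.Ioi (0:ℝ)))
    simpa using this
  refine mem_closure_of_tendsto htend ?_
  filter_upwards [self_mem_nhdsWithin] with t ht
  have hposdef : (treeMat G a b + t • (1 : Matrix (Fin p) (Fin p) ℝ)).PosDef := by
    refine Matrix.PosDef.posSemidef_add h ?_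
    have : t • (1 : Matrix (Fin p) (Fin p) ℝ) = Matrix.diagonal (fun _ => t) := by
      ext i j
      simp [Matrix.one_apply, Matrix.diagonal_apply, mul_ite, mul_one, mul_zero]
    rw [this]
    exact Matrix.PosDef.diagonal fun _ => ht
  exact ⟨⟨fun i => a i + t, b, (key t).symm⟩, hposdef⟩

lemma path_length_eq_dist (hG : G.IsTree) {u v : Fin p} (w : G.Walk u v) (hw : w.IsPath) :
    w.length = G.dist u v := by
  classical
  obtain ⟨q, hq, huniq⟩ := hG.existsUnique_path u v
  obtain ⟨w', hw'⟩ := (hG.isConnected u v).exists_walk_length_eq_dist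
  have hw'path : w'.IsPath := w'.isPath_of_length_eq_dist hw'
  rw [huniq w hw, ← huniq w' hw'path, hw']

lemma adj_dist (hG : G.IsTree) {u x : Fin p} (h : G.Adj u x) (v : Fin p) :
    G.dist u v + 1 = G.dist x v ∨ G.dist x v + 1 = G.dist u v := by
  classical
  obtain ⟨q, hq, -⟩ := hG.existsUnique_path x v
  have hqlen : q.length = G.dist x v := path_length_eq_dist G hG q hq
  by_cases hu : u ∈ q.support
  · left
    have h1 : (q.takeUntil u hu).IsPath := hq.takeUntil hu
    have h2 : (q.dropUntil u hu).IsPath := hq.dropUntil hu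
    have hsum : (q.takeUntil u hu).length + (q.dropUntil u hu).length = q.length := by
      have := congr_arg SimpleGraph.Walk.length (q.take_spec hu)
      rwa [SimpleGraph.Walk.length_append] at this
    have htake : (q.takeUntil u hu).length = G.dist x u := path_length_eq_dist G hG _ h1
    have hdrop : (q.dropUntil u hu).length = G.dist u v := path_length_eq_dist G hG _ h2
    have hxu : G.dist x u = 1 := SimpleGraph.dist_eq_one_iff_adj.mpr h.symm
    omega
  · right
    have hcons : (SimpleGraph.Walk.cons h q).IsPath := hq.cons hu
    have := path_length_eq_dist G hG _ hcons
    rw [SimpleGraph.Walk.length_cons, hqlen] at this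
    omega

lemma exists_sign (hG : G.IsTree) (r : Fin p) :
    ∃ ε : Fin p → ℝ, (∀ i, ε i = 1 ∨ ε i = -1) ∧ ∀ i j, G.Adj i j → ε i * ε j = -1 := by
  refine ⟨fun i => (-1 : ℝ) ^ (G.dist r i), fun i => ?_, fun i j hij => ?_⟩
  · rcases Nat.even_or_odd (G.dist r i) with h | h
    · exact Or.inl h.neg_one_pow
    · exact Or.inr h.neg_one_pow
  · show (-1 : ℝ) ^ (G.dist r i) * (-1 : ℝ) ^ (G.dist r j) = -1
    have key := adj_dist G hG hij r
    rw [SimpleGraph.dist_comm (u := i) (v := r), SimpleGraph.dist_comm (u := j) (v := r)] at key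
    have aux : ∀ d : ℕ, (-1 : ℝ) ^ (d + 1) * (-1 : ℝ) ^ d = -1 := by
      intro d
      rw [← pow_add]
      have : d + 1 + d = 2 * d + 1 := by ring
      rw [this, pow_succ, pow_mul]
      norm_num
    rcases key with hkey | hkey
    · rw [← hkey]
      rw [mul_comm]
      exact aux _
    · rw [← hkey]
      exact aux _

lemma exists_edge (hp : 2 ≤ p) (hG : G.IsTree) : ∃ i j : Fin p, G.Adj i j := by
  have h0 : (0 : ℕ) < p := by omega
  have h1 : (1 : ℕ) < p := by omega
  have hne : (⟨0, h0⟩ : Fin p) ≠ ⟨1, h1⟩ := by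
    intro h
    simpa using congr_arg Fin.val h
  obtain ⟨w⟩ := hG.isConnected ⟨0, h0⟩ ⟨1, h1⟩
  cases w with
  | cons h _ => exact ⟨_, _, h⟩

lemma pair_ineq (s t u v eps : ℝ) (hs : 0 < s) (ht : 0 < t) (heps : eps = 1 ∨ eps = -1) :
    0 ≤ (t / s) * u ^ 2 + eps * (u * v) + ((s / t) * v ^ 2 + eps * (v * u)) := by
  have key : (t / s) * u ^ 2 + eps * (u * v) + ((s / t) * v ^ 2 + eps * (v * u))
      = (t * u + eps * (s * v)) ^ 2 / (s * t) := by
    rcases heps with rfl | rfl <;> field_simp <;> ring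
  rw [key]
  positivity

lemma diag_nonneg {a : Fin p → ℝ} {b : ℝ} (h : (treeMat G a b).PosSemidef) (i : Fin p) :
    0 ≤ a i := by
  classical
  have hq := h.dotProduct_mulVec_nonneg (Pi.single i 1)
  have hstar : star (Pi.single i (1:ℝ)) = (Pi.single i 1 : Fin p → ℝ) := by simp
  rw [hstar, quad_treeMat] at hq
  have h1 : (∑ k, a k * ((Pi.single i 1 : Fin p → ℝ) k) ^ 2) = a i := by
    rw [Finset.sum_eq_single i]
    · simp
    · intro k _ hk; simp [Pi.single_apply, hk]
    · simp
  have h2 : (∑ k, ∑ l, if G.Adj k l then (Pi.single i 1 : Fin p → ℝ) k * (Pi.single i 1 : Fin p → ℝ) l else 0)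
      = 0 := by
    refine Finset.sum_eq_zero fun k _ => Finset.sum_eq_zero fun l _ => ?_
    by_cases hadj : G.Adj k l
    · simp only [hadj, if_true]
      rcases eq_or_ne k i with rfl | hk
      · rcases eq_or_ne l k with rfl | hl
        · exact absurd hadj (G.irrefl)
        · simp [Pi.single_apply, hl]
      · simp [Pi.single_apply, hk]
    · simp [hadj]
  rw [h1, h2, mul_zero, add_zero] at hq
  exact hq

lemma psd_lower {a a' : Fin p → ℝ} {b : ℝ} (hG : G.IsTree)
    (h : (treeMat G a b).PosSemidef) (ha' : ∀ i, 0 < a' i) :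
    |b| * (∑ i, ∑ j, if G.Adj i j then Real.sqrt (a' i * a' j) else 0) ≤ ∑ i, a i * a' i := by
  classical
  have hp0 : 0 < p := Fin.pos_iff_nonempty.mpr hG.isConnected.nonempty
  obtain ⟨ε, hε1, hεe⟩ := exists_sign G hG ⟨0, hp0⟩
  obtain ⟨c, hc2, hce⟩ : ∃ c : Fin p → ℝ, (∀ i, c i ^ 2 = 1) ∧
      (∀ i j, G.Adj i j → b * (c i * c j) = -|b|) := by
    rcases le_or_gt 0 b with hb | hb
    · refine ⟨ε, fun i => by rcases hε1 i with h'|h' <;> rw [h'] <;> norm_num,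
        fun i j hij => ?_⟩
      rw [hεe i j hij, abs_of_nonneg hb]; ring
    · exact ⟨fun _ => 1, fun _ => by norm_num,
        fun i j _ => by rw [abs_of_neg hb]; ring⟩
  set x : Fin p → ℝ := fun i => c i * Real.sqrt (a' i) with hx
  have hq := h.dotProduct_mulVec_nonneg x
  have hstar : star x = x := by simp
  rw [hstar, quad_treeMat] at hq
  have h1 : (∑ i, a i * x i ^ 2) = ∑ i, a i * a' i := by
    refine Finset.sum_congr rfl fun i _ => ?_
    rw [hx]
    rw [mul_pow, hc2 i, one_mul, Real.sq_sqrt (ha' i).le]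
  have h2 : b * (∑ i, ∑ j, if G.Adj i j then x i * x j else 0)
      = -|b| * (∑ i, ∑ j, if G.Adj i j then Real.sqrt (a' i * a' j) else 0) := by
    rw [Finset.mul_sum, Finset.mul_sum]
    refine Finset.sum_congr rfl fun i _ => ?_
    rw [Finset.mul_sum, Finset.mul_sum]
    refine Finset.sum_congr rfl fun j _ => ?_
    by_cases hadj : G.Adj i j
    · simp only [hadj, if_true, hx]
      rw [Real.sqrt_mul (ha' i).le]
      have expand : b * (c i * Real.sqrt (a' i) * (c j * Real.sqrt (a' j)))
          = (b * (c i * c j)) * (Real.sqrt (a' i) * Real.sqrt (a' j)) := by ring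
      rw [expand, hce i j hadj]
    · simp [hadj]
  rw [h1, h2] at hq
  linarith

lemma witness_psd (hG : G.IsTree) {a' : Fin p → ℝ} (ha' : ∀ i, 0 < a' i)
    {ε : ℝ} (hε : ε = 1 ∨ ε = -1) :
    (treeMat G (fun i => ∑ j, if G.Adj i j then Real.sqrt (a' j) / Real.sqrt (a' i) else 0)
      ε).PosSemidef := by
  classical
  refine Matrix.PosSemidef.of_dotProduct_mulVec_nonneg (treeMat_isHermitian G _ _) fun x => ?_
  have hstar : star x = x := by simp
  rw [hstar, quad_treeMat]
  set h : Fin p → Fin p → ℝ := fun i j =>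
    (if G.Adj i j then Real.sqrt (a' j) / Real.sqrt (a' i) * x i ^ 2 else 0)
      + (if G.Adj i j then ε * (x i * x j) else 0) with hh
  have goal_eq : (∑ i, (fun i => ∑ j, if G.Adj i j then Real.sqrt (a' j) / Real.sqrt (a' i)
        else 0) i * x i ^ 2)
      + ε * (∑ i, ∑ j, if G.Adj i j then x i * x j else 0) = ∑ i, ∑ j, h i j := by
    rw [Finset.mul_sum, ← Finset.sum_add_distrib]
    refine Finset.sum_congr rfl fun i _ => ?_
    rw [Finset.sum_mul, Finset.mul_sum, ← Finset.sum_add_distrib]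
    refine Finset.sum_congr rfl fun j _ => ?_
    simp only [hh, ite_mul, zero_mul, mul_ite, mul_zero]
  have pair_nonneg : ∀ i j, 0 ≤ h i j + h j i := by
    intro i j
    by_cases hadj : G.Adj i j
    · have hadj' : G.Adj j i := hadj.symm
      simp only [hh, hadj, hadj', if_true]
      exact pair_ineq (Real.sqrt (a' i)) (Real.sqrt (a' j)) (x i) (x j) ε
        (Real.sqrt_pos.mpr (ha' i)) (Real.sqrt_pos.mpr (ha' j)) hε
    · have hadj' : ¬ G.Adj j i := fun hcon => hadj hcon.symm
      simp [hh, hadj, hadj']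
  have hsum : 0 ≤ ∑ i, ∑ j, (h i j + h j i) :=
    Finset.sum_nonneg fun i _ => Finset.sum_nonneg fun j _ => pair_nonneg i j
  have split : (∑ i, ∑ j, (h i j + h j i))
      = (∑ i, ∑ j, h i j) + (∑ i, ∑ j, h j i) := by
    simp [Finset.sum_add_distrib]
  have c1 : (∑ i : Fin p, ∑ j : Fin p, h j i) = ∑ i : Fin p, ∑ j : Fin p, h i j :=
    Finset.sum_comm
  rw [goal_eq]
  rw [split, c1] at hsum
  linarith

lemma witness_sum {a' : Fin p → ℝ} (ha' : ∀ i, 0 < a' i) :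
    (∑ i, (∑ j, if G.Adj i j then Real.sqrt (a' j) / Real.sqrt (a' i) else 0) * a' i)
      = ∑ i, ∑ j, if G.Adj i j then Real.sqrt (a' i * a' j) else 0 := by
  refine Finset.sum_congr rfl fun i _ => ?_
  rw [Finset.sum_mul]
  refine Finset.sum_congr rfl fun j _ => ?_
  by_cases hadj : G.Adj i j
  · simp only [hadj, if_true]
    rw [Real.sqrt_mul (ha' i).le]
    calc Real.sqrt (a' j) / Real.sqrt (a' i) * a' i
        = Real.sqrt (a' j) * (a' i / Real.sqrt (a' i)) := by ring
      _ = Real.sqrt (a' j) * Real.sqrt (a' i) := by rw [Real.div_sqrt]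
      _ = Real.sqrt (a' i) * Real.sqrt (a' j) := mul_comm _ _
  · simp [hadj]

end DualTree

theorem dual_cone_tree (p : ℕ) (hp : 2 ≤ p) (G : SimpleGraph (Fin p))
    [DecidableRel G.Adj] (hG : G.IsTree) :
    {D : Matrix (Fin p) (Fin p) ℝ | (∃ a' b', D = treeMat G a' b') ∧
        ∀ K ∈ closure {K : Matrix (Fin p) (Fin p) ℝ |
            (∃ a b, K = treeMat G a b) ∧ K.PosDef},
          K ≠ 0 → 0 < (K * D).trace}
      = {D : Matrix (Fin p) (Fin p) ℝ | ∃ a' b', D = treeMat G a' b' ∧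
          (∀ i, 0 < a' i) ∧
          |b'| < (1 / (p - 1 : ℝ)) *
            ((1/2 : ℝ) * ∑ i, ∑ j,
              if G.Adj i j then Real.sqrt (a' i * a' j) else 0)} := by
  classical
  have hp0 : (0:ℝ) < (p:ℝ) - 1 := by
    have : (2:ℝ) ≤ (p:ℝ) := by exact_mod_cast hp
    linarith
  have h2p : (0:ℝ) < 2 * ((p:ℝ) - 1) := by linarith
  have hE := DualTree.edge_count G hG
  ext D
  simp only [Set.mem_setOf_eq]
  constructor
  · rintro ⟨⟨a', b', rfl⟩, hdual⟩
    have ha' : ∀ i, 0 < a' i := by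
      intro i
      have hK : (treeMat G (Pi.single i 1) 0).PosSemidef := by
        rw [DualTree.treeMat_zero]
        refine Matrix.PosSemidef.diagonal fun j => ?_
        by_cases hj : j = i <;> simp [Pi.single_apply, hj]
      have hmem := DualTree.mem_closure_of_psd G (Pi.single i 1) 0 hK
      have hne : treeMat G (Pi.single i 1) 0 ≠ 0 := by
        intro h0
        have := congrFun (congrFun h0 i) i
        simp [DualTree.treeMat_apply] at this
      have htr := hdual _ hmem hne
      rw [DualTree.trace_treeMat_mul] at htr
      simp only [zero_mul, add_zero] at htr
      have hs : (∑ k, (Pi.single i 1 : Fin p → ℝ) k * a' k) = a' i := by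
        rw [Finset.sum_eq_single i]
        · simp
        · intro k _ hk; simp [Pi.single_apply, hk]
        · simp
      rwa [hs] at htr
    refine ⟨a', b', rfl, ha', ?_⟩
    obtain ⟨ε, hεpm, hεb⟩ : ∃ ε : ℝ, (ε = 1 ∨ ε = -1) ∧ ε * b' = -|b'| := by
      rcases le_or_gt 0 b' with h | h
      · exact ⟨-1, Or.inr rfl, by rw [abs_of_nonneg h]; ring⟩
      · exact ⟨1, Or.inl rfl, by rw [abs_of_neg h]; ring⟩
    have hKpsd := DualTree.witness_psd G hG ha' hεpm
    have hmem := DualTree.mem_closure_of_psd G _ ε hKpsd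
    obtain ⟨i0, j0, hadj0⟩ := DualTree.exists_edge G hp hG
    have hne : treeMat G
        (fun i => ∑ j, if G.Adj i j then Real.sqrt (a' j) / Real.sqrt (a' i) else 0) ε ≠ 0 := by
      intro h0
      have hentry := congrFun (congrFun h0 i0) j0
      rw [DualTree.treeMat_apply] at hentry
      have hne0 : i0 ≠ j0 := G.ne_of_adj hadj0
      rw [if_neg hne0, if_pos hadj0] at hentry
      rcases hεpm with h | h <;> rw [h] at hentry <;> norm_num at hentry
    have htr := hdual _ hmem hne
    rw [DualTree.trace_treeMat_mul, hE] at htr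
    rw [DualTree.witness_sum G ha', hεb] at htr
    have hWb : |b'| * (2 * ((p:ℝ) - 1))
        < ∑ i, ∑ j, if G.Adj i j then Real.sqrt (a' i * a' j) else 0 := by linarith
    have heq : (1 / ((p:ℝ) - 1)) * ((1/2 : ℝ) *
          ∑ i, ∑ j, if G.Adj i j then Real.sqrt (a' i * a' j) else 0)
        = (∑ i, ∑ j, if G.Adj i j then Real.sqrt (a' i * a' j) else 0)
          / (2 * ((p:ℝ) - 1)) := by
      rw [mul_comm 2 ((p:ℝ)-1), ← div_div]
      ring
    rw [heq, lt_div_iff₀ h2p]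
    exact hWb
  · rintro ⟨a', b', rfl, ha', hb'⟩
    refine ⟨⟨a', b', rfl⟩, ?_⟩
    intro K hK hKne
    obtain ⟨⟨a, b, rfl⟩, hpsd⟩ := DualTree.closure_sub G hK
    rw [DualTree.trace_treeMat_mul, hE]
    have hW := DualTree.psd_lower G hG hpsd ha'
    have heq : (1 / ((p:ℝ) - 1)) * ((1/2 : ℝ) *
          ∑ i, ∑ j, if G.Adj i j then Real.sqrt (a' i * a' j) else 0)
        = (∑ i, ∑ j, if G.Adj i j then Real.sqrt (a' i * a' j) else 0)
          / (2 * ((p:ℝ) - 1)) := by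
      rw [mul_comm 2 ((p:ℝ)-1), ← div_div]
      ring
    rw [heq, lt_div_iff₀ h2p] at hb'
    by_cases hb : b = 0
    · subst hb
      have hex : ∃ i, a i ≠ 0 := by
        by_contra hno
        push_neg at hno
        apply hKne
        ext i j
        rw [DualTree.treeMat_apply]
        split_ifs <;> simp [hno]
      obtain ⟨i, hai⟩ := hex
      have hpos : 0 < a i := lt_of_le_of_ne (DualTree.diag_nonneg G hpsd i) (Ne.symm hai)
      have hsum : 0 < ∑ i, a i * a' i :=
        Finset.sum_pos' (fun j _ => mul_nonneg (DualTree.diag_nonneg G hpsd j) (ha' j).le)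
          ⟨i, Finset.mem_univ i, mul_pos hpos (ha' i)⟩
      simpa using hsum
    · have habs : 0 < |b| := abs_pos.mpr hb
      have hmul : |b| * (|b'| * (2 * ((p:ℝ) - 1)))
          < |b| * (∑ i, ∑ j, if G.Adj i j then Real.sqrt (a' i * a' j) else 0) :=
        (mul_lt_mul_iff_right₀ habs).mpr hb'
      have hbb' : -(|b| * |b'|) ≤ b * b' := by
        have h1 := neg_abs_le (b * b')
        rw [abs_mul] at h1
        linarith
      have h3 := mul_le_mul_of_nonneg_right hbb' h2p.le
      have hrw : -(|b| * |b'|) * (2 * ((p:ℝ) - 1))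
          = -(|b| * (|b'| * (2 * ((p:ℝ) - 1)))) := by ring
      rw [hrw] at h3
      linarith
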